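/- Let G be a graph on n vertices. The number of modules M of G such that both the induced subgraph G[M] and its complement are connected is at most 2n − 1. -/

import Mathlib

open SimpleGraph

variable {V : Type*}

/-- `D` is (the vertex set of) a connected component of `G - S`. -/
def IsCompOf (G : SimpleGraph V) (S D : Set V) : Prop :=
  D.Nonempty ∧ Disjoint D S ∧ (G.induce D).Connected ∧
    ∀ v ∈ D, ∀ w : V, G.Adj v w → w ∉ S → w ∈ D

/-- The open neighborhood `N(D)` of a vertex set `D`. -/
def nbhd (G : SimpleGraph V) (D : Set V) : Set V :=
  {v | v ∉ D ∧ ∃ d ∈ D, G.Adj v d}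

/-- The closed neighborhood `N[D]` of a vertex set `D`. -/
def closedNbhd (G : SimpleGraph V) (D : Set V) : Set V :=
  D ∪ nbhd G D

/-- `D` is full to `S`: every vertex of `S` has a neighbor in `D`. -/
def FullTo (G : SimpleGraph V) (S D : Set V) : Prop :=
  ∀ s ∈ S, ∃ d ∈ D, G.Adj s d

/-- `S` is a minimal separator: `G - S` has at least two components full to `S`. -/
def IsMinSep (G : SimpleGraph V) (S : Set V) : Prop :=
  ∃ D₁ D₂ : Set V, IsCompOf G S D₁ ∧ IsCompOf G S D₂ ∧ D₁ ≠ D₂ ∧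
    FullTo G S D₁ ∧ FullTo G S D₂

/-- `M` is a module of `G`. -/
def IsModule (G : SimpleGraph V) (M : Set V) : Prop :=
  M.Nonempty ∧ ∀ v ∉ M, (∀ m ∈ M, G.Adj v m) ∨ (∀ m ∈ M, ¬ G.Adj v m)

/-- `M` is a proper strong module of `G`. -/
def IsProperStrongModule (G : SimpleGraph V) (M : Set V) : Prop :=
  IsModule G M ∧ M ≠ Set.univ ∧
    ∀ M' : Set V, IsModule G M' → M ⊆ M' ∨ M' ⊆ M ∨ Disjoint M M'

/-- `M` is a maximal proper strong module of `G`. -/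
def IsMaxPSM15 (G : SimpleGraph V) (M : Set V) : Prop :=
  IsProperStrongModule G M ∧
    ∀ M' : Set V, IsProperStrongModule G M' → M ⊆ M' → M' = M

section LaminarBound

variable {α : Type*} [DecidableEq α]

/-- A laminar family `F` of nonempty finite sets satisfies
`|F| + #(maximal members of F) ≤ 2 |⋃ F|`. -/
private theorem lam_bound (F : Finset (Finset α)) :
    (∀ S ∈ F, S.Nonempty) →
    (∀ S ∈ F, ∀ T ∈ F, S ⊆ T ∨ T ⊆ S ∨ Disjoint S T) →
    F.card + (F.filter (fun S => ∀ T ∈ F, ¬ S ⊂ T)).card ≤ 2 * (F.sup id).card := by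
  induction F using Finset.strongInduction with
  | _ F ih =>
  intro hne hlam
  rcases F.eq_empty_or_nonempty with rfl | hFne
  · simp
  obtain ⟨M, hMF, hMmax⟩ := F.exists_maximal hFne
  have hMmax : ∀ T ∈ F, ¬ M ⊂ T := fun T hT h => not_subset_of_ssubset h (hMmax hT h.subset)
  set F' := F.erase M with hF'
  have hF'ss : F' ⊂ F := Finset.erase_ssubset hMF
  have hsub : ∀ T ∈ F, T ≠ M → ¬ Disjoint T M → T ⊂ M := by
    intro T hT hTM hdisj
    rcases hlam T hT M hMF with h | h | h
    · exact lt_of_le_of_ne h hTM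
    · exact absurd (lt_of_le_of_ne h (Ne.symm hTM)) (hMmax T hT)
    · exact absurd h hdisj
  set TC := F.filter (fun T => T ⊂ M ∧ ∀ X ∈ F, ¬ (T ⊂ X ∧ X ⊂ M)) with hTC
  have exists_tc : ∀ T ∈ F, T ⊂ M → ∃ W ∈ TC, T ⊆ W := by
    intro T hT hTM
    set A := F.filter (fun X => T ⊆ X ∧ X ⊂ M) with hA
    have hAne : A.Nonempty := ⟨T, by simp [hA, hT, hTM]⟩
    obtain ⟨W, hWA, hWmax⟩ := A.exists_maximal hAne
    have hWmax : ∀ X ∈ A, ¬ W ⊂ X := fun X hX h => not_subset_of_ssubset h (hWmax hX h.subset)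
    rw [hA, Finset.mem_filter] at hWA
    refine ⟨W, ?_, hWA.2.1⟩
    rw [hTC, Finset.mem_filter]
    refine ⟨hWA.1, hWA.2.2, ?_⟩
    rintro X hX ⟨h1, h2⟩
    exact hWmax X (by rw [hA, Finset.mem_filter]; exact ⟨hX, hWA.2.1.trans h1.subset, h2⟩) h1
  have hmax_eq : F'.filter (fun S => ∀ T ∈ F', ¬ S ⊂ T)
      = ((F.filter (fun S => ∀ T ∈ F, ¬ S ⊂ T)).erase M) ∪ TC := by
    ext T
    simp only [Finset.mem_union, Finset.mem_erase, Finset.mem_filter, hTC, hF']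
    constructor
    · rintro ⟨⟨hTM, hTF⟩, hmax'⟩
      by_cases h : ∀ W ∈ F, ¬ T ⊂ W
      · exact Or.inl ⟨hTM, hTF, h⟩
      · push_neg at h
        obtain ⟨W, hWF, hTW⟩ := h
        have hWM : W = M := by
          by_contra hWM
          exact hmax' W ⟨hWM, hWF⟩ hTW
        subst hWM
        refine Or.inr ⟨hTF, hTW, ?_⟩
        rintro X hX ⟨h1, h2⟩
        exact hmax' X ⟨h2.ne, hX⟩ h1
    · rintro (⟨hTM, hTF, hmaxT⟩ | ⟨hTF, hTM, htc⟩)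
      · exact ⟨⟨hTM, hTF⟩, fun W hW => hmaxT W hW.2⟩
      · refine ⟨⟨hTM.ne, hTF⟩, ?_⟩
        rintro W ⟨hWM, hWF⟩ hTW
        obtain ⟨x, hx⟩ := hne T hTF
        have hnd : ¬ Disjoint W M :=
          Finset.not_disjoint_iff.mpr ⟨x, hTW.subset hx, hTM.subset hx⟩
        exact htc W hWF ⟨hTW, hsub W hWF hWM hnd⟩
  have hdisj_parts : Disjoint ((F.filter (fun S => ∀ T ∈ F, ¬ S ⊂ T)).erase M) TC := by
    rw [Finset.disjoint_left]
    intro T hT hT'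
    rw [Finset.mem_erase, Finset.mem_filter] at hT
    rw [hTC, Finset.mem_filter] at hT'
    exact hT.2.2 M hMF hT'.2.1
  have hMmem : M ∈ F.filter (fun S => ∀ T ∈ F, ¬ S ⊂ T) := Finset.mem_filter.mpr ⟨hMF, hMmax⟩
  have hk1 : 1 ≤ (F.filter (fun S => ∀ T ∈ F, ¬ S ⊂ T)).card :=
    Finset.card_pos.mpr ⟨M, hMmem⟩
  have hkeq : (F'.filter (fun S => ∀ T ∈ F', ¬ S ⊂ T)).card + 1
      = (F.filter (fun S => ∀ T ∈ F, ¬ S ⊂ T)).card + TC.card := by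
    rw [hmax_eq, Finset.card_union_of_disjoint hdisj_parts, Finset.card_erase_of_mem hMmem]
    omega
  have hIH := ih F' hF'ss (fun S hS => hne S (Finset.mem_of_mem_erase hS))
      (fun S hS T hT => hlam S (Finset.mem_of_mem_erase hS) T (Finset.mem_of_mem_erase hT))
  have hFpos : 0 < F.card := Finset.card_pos.mpr hFne
  have hcardF : F'.card = F.card - 1 := Finset.card_erase_of_mem hMF
  have hU'sub : F'.sup id ⊆ F.sup id := Finset.sup_mono (Finset.erase_subset _ _)
  by_cases hc0 : TC.card = 0
  · have hTCe : TC = ∅ := Finset.card_eq_zero.mp hc0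
    have hdis : ∀ T ∈ F', Disjoint T M := by
      intro T hT
      by_contra hd
      have hTM : T ⊂ M := hsub T (Finset.mem_of_mem_erase hT) (Finset.ne_of_mem_erase hT) hd
      obtain ⟨W, hW, _⟩ := exists_tc T (Finset.mem_of_mem_erase hT) hTM
      simp [hTCe] at hW
    have hUeq : F.sup id = M ⊔ F'.sup id := by
      conv_lhs => rw [← Finset.insert_erase hMF]
      exact Finset.sup_insert
    have hdMU : Disjoint M (F'.sup id) :=
      Finset.disjoint_sup_right.mpr (fun T hT => (hdis T hT).symm)
    have hcardU : (F.sup id).card = M.card + (F'.sup id).card := by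
      rw [hUeq, Finset.sup_eq_union]
      exact Finset.card_union_of_disjoint hdMU
    have hMpos : 0 < M.card := Finset.card_pos.mpr (hne M hMF)
    omega
  by_cases hc1 : TC.card = 1
  · obtain ⟨C, hC⟩ := Finset.card_eq_one.mp hc1
    have hCtc : C ∈ TC := by rw [hC]; exact Finset.mem_singleton_self C
    rw [hTC, Finset.mem_filter] at hCtc
    obtain ⟨x, hxM, hxC⟩ := Finset.exists_of_ssubset hCtc.2.1
    have hxU : x ∈ F.sup id := Finset.mem_sup.mpr ⟨M, hMF, hxM⟩
    have hxU' : x ∉ F'.sup id := by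
      intro hx
      obtain ⟨T, hTF', hxT⟩ := Finset.mem_sup.mp hx
      have hTM : T ⊂ M := hsub T (Finset.mem_of_mem_erase hTF') (Finset.ne_of_mem_erase hTF')
        (Finset.not_disjoint_iff.mpr ⟨x, hxT, hxM⟩)
      obtain ⟨W, hWtc, hTW⟩ := exists_tc T (Finset.mem_of_mem_erase hTF') hTM
      rw [hC, Finset.mem_singleton] at hWtc
      exact hxC (hWtc ▸ hTW hxT)
    have hUlt : (F'.sup id).card < (F.sup id).card :=
      Finset.card_lt_card ((Finset.ssubset_iff_of_subset hU'sub).mpr ⟨x, hxU, hxU'⟩)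
    omega
  · have hc2 : 2 ≤ TC.card := by omega
    have hUle : (F'.sup id).card ≤ (F.sup id).card := Finset.card_le_card hU'sub
    omega

/-- A nonempty laminar family `F` of nonempty finite sets satisfies `|F| + 1 ≤ 2 |⋃ F|`. -/
private theorem lam_bound_ne (F : Finset (Finset α)) (hFne : F.Nonempty)
    (h1 : ∀ S ∈ F, S.Nonempty)
    (h2 : ∀ S ∈ F, ∀ T ∈ F, S ⊆ T ∨ T ⊆ S ∨ Disjoint S T) :
    F.card + 1 ≤ 2 * (F.sup id).card := by
  obtain ⟨M, hMF, hMmax⟩ := F.exists_maximal hFne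
  have hMmax : ∀ T ∈ F, ¬ M ⊂ T := fun T hT h => not_subset_of_ssubset h (hMmax hT h.subset)
  have hk : 1 ≤ (F.filter (fun S => ∀ T ∈ F, ¬ S ⊂ T)).card :=
    Finset.card_pos.mpr ⟨M, Finset.mem_filter.mpr ⟨hMF, hMmax⟩⟩
  have hb := lam_bound F h1 h2
  omega

end LaminarBound

private lemma walk_invar {W : Type*} {H : SimpleGraph W} {P : W → Prop}
    (h : ∀ x y, H.Adj x y → P x → P y) : ∀ {x y : W}, H.Walk x y → P x → P y := by
  intro x y w
  induction w with
  | nil => exact id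
  | cons hadj p ihp => exact fun hx => ihp (h _ _ hadj hx)

/-- A module whose induced subgraph is connected and co-connected does not overlap
any other module. -/
private lemma good_laminar {G : SimpleGraph V} {M M' : Set V}
    (hM : IsModule G M) (hc : (G.induce M).Connected) (hcc : ((G.induce M)ᶜ).Connected)
    (hM' : IsModule G M') :
    M ⊆ M' ∨ M' ⊆ M ∨ Disjoint M M' := by
  by_contra h
  push_neg at h
  obtain ⟨hns, hns', hnd⟩ := h
  obtain ⟨b, hbM', hbM⟩ := Set.not_subset.mp hns'
  obtain ⟨c, hcM, hcM'⟩ := Set.not_disjoint_iff.mp hnd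
  obtain ⟨a, haM, haM'⟩ := Set.not_subset.mp hns
  rcases hM.2 b hbM with hb | hb
  · -- `b` is adjacent to all of `M` : the complement of `G[M]` would be disconnected
    have key : ∀ x ∈ M, x ∉ M' → ∀ y ∈ M', G.Adj x y := by
      intro x hx hx'
      rcases hM'.2 x hx' with h' | h'
      · exact h'
      · exact absurd ((hb x hx).symm) (h' b hbM')
    refine haM' ?_
    refine (hcc.preconnected ⟨c, hcM⟩ ⟨a, haM⟩).elim
      (fun w => walk_invar (P := fun z : M => (z : V) ∈ M') ?_ w hcM')
    rintro ⟨x, hx⟩ ⟨y, hy⟩ hadj hxP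
    by_contra hyP
    exact hadj.2 ((key y hy hyP x hxP).symm)
  · -- `b` is adjacent to nothing in `M` : `G[M]` would be disconnected
    have key : ∀ x ∈ M, x ∉ M' → ∀ y ∈ M', ¬ G.Adj x y := by
      intro x hx hx'
      rcases hM'.2 x hx' with h' | h'
      · exact absurd ((hb x hx)) (fun hh => hh (h' b hbM').symm)
      · exact h'
    refine haM' ?_
    refine (hc.preconnected ⟨c, hcM⟩ ⟨a, haM⟩).elim
      (fun w => walk_invar (P := fun z : M => (z : V) ∈ M') ?_ w hcM')
    rintro ⟨x, hx⟩ ⟨y, hy⟩ hadj hxP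
    by_contra hyP
    exact key y hy hyP x hxP hadj.symm

/-- The number of modules `M` of a graph `G` on `n` vertices such that both `G[M]` and
its complement are connected is at most `2n - 1`. -/
theorem statement_15 [Fintype V] (G : SimpleGraph V) :
    {M : Set V | IsModule G M ∧ (G.induce M).Connected ∧
      ((G.induce M)ᶜ).Connected}.ncard ≤ 2 * Fintype.card V - 1 := by
  classical
  set S : Set (Set V) := {M : Set V | IsModule G M ∧ (G.induce M).Connected ∧
      ((G.induce M)ᶜ).Connected} with hS
  have hSfin : S.Finite := Set.toFinite S
  set F : Finset (Finset V) := hSfin.toFinset.image (fun M => (Set.toFinite M).toFinset)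
    with hF
  have hinj : Function.Injective (fun M : Set V => (Set.toFinite M).toFinset) := by
    intro A B h
    exact Set.Finite.toFinset_inj.mp h
  have hcard : F.card = S.ncard := by
    rw [hF, Finset.card_image_of_injective _ hinj, ← Set.ncard_eq_toFinset_card]
  have hmem : ∀ A ∈ F, ∃ M ∈ S, (Set.toFinite M).toFinset = A := by
    intro A hA
    rw [hF, Finset.mem_image] at hA
    obtain ⟨M, hM, rfl⟩ := hA
    exact ⟨M, hSfin.mem_toFinset.mp hM, rfl⟩
  have hne : ∀ A ∈ F, A.Nonempty := by
    intro A hA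
    obtain ⟨M, hM, rfl⟩ := hmem A hA
    obtain ⟨x, hx⟩ := hM.1.1
    exact ⟨x, (Set.Finite.mem_toFinset _).mpr hx⟩
  have hlam : ∀ A ∈ F, ∀ B ∈ F, A ⊆ B ∨ B ⊆ A ∨ Disjoint A B := by
    intro A hA B hB
    obtain ⟨M, hM, rfl⟩ := hmem A hA
    obtain ⟨M', hM', rfl⟩ := hmem B hB
    rcases good_laminar hM.1 hM.2.1 hM.2.2 hM'.1 with h | h | h
    · exact Or.inl (Set.Finite.toFinset_subset_toFinset.mpr h)
    · exact Or.inr (Or.inl (Set.Finite.toFinset_subset_toFinset.mpr h))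
    · exact Or.inr (Or.inr (Set.Finite.disjoint_toFinset.mpr h))
  rcases F.eq_empty_or_nonempty with hFe | hFne
  · have : S.ncard = 0 := by rw [← hcard, hFe]; simp
    omega
  have hbound := lam_bound_ne F hFne hne hlam
  have hUle : (F.sup id).card ≤ Fintype.card V := Finset.card_le_univ _
  omega
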